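/- For I ≥ 2 identical teams each with resource R̄/I, risk-sensitivity α ∈ (0,1), contest exponent μ > 0, and parameters β ∈ (0,1], γ ∈ (0,1], σ ∈ [0,1), define K = α + (1−α)(I−1) and the candidate symmetric equilibrium arming g = μ(I−1)α(1−α)γ(1−σ)βR̄ / ( γ(1−σ)β[μI(I−1)α(1−α) + αK] + σβK² ). Then g > 0 and g < R̄/I. -/
import Mathlib


/-- Interiority of the symmetric expectile-equilibrium arming level: with
`K = α + (1-α)(I-1)` and
`g = μ(I-1)α(1-α)γ(1-σ)βR̄ / (γ(1-σ)β[μI(I-1)α(1-α) + αK] + σβK²)`,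
one has `0 < g < R̄/I`. -/
theorem symmetric_expectile_equilibrium_interior (I : ℕ) (hI : 2 ≤ I)
    (Rbar μ α β γ σ : ℝ) (hRbar : 0 < Rbar) (hμ : 0 < μ)
    (hα : α ∈ Set.Ioo (0:ℝ) 1)
    (hβ : β ∈ Set.Ioc (0:ℝ) 1) (hγ : γ ∈ Set.Ioc (0:ℝ) 1)
    (hσ : σ ∈ Set.Ico (0:ℝ) 1)
    (hpos : 0 < β * γ * (1 - σ))
    (K g : ℝ)
    (hK : K = α + (1 - α) * ((I : ℝ) - 1))
    (hg : g = μ * ((I : ℝ) - 1) * α * (1 - α) * γ * (1 - σ) * β * Rbar /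
        (γ * (1 - σ) * β * (μ * (I : ℝ) * ((I : ℝ) - 1) * α * (1 - α) + α * K) +
          σ * β * K ^ 2)) :
    0 < g ∧ g < Rbar / (I : ℝ) := by

  obtain ⟨hα0, hα1⟩ := hα
  obtain ⟨hβ0, hβ1⟩ := hβ
  obtain ⟨hγ0, hγ1⟩ := hγ
  obtain ⟨hσ0, hσ1⟩ := hσ
  have hI2 : (2:ℝ) ≤ (I:ℝ) := by exact_mod_cast hI
  have hIm1 : (0:ℝ) < (I:ℝ) - 1 := by linarith
  have hIpos : (0:ℝ) < (I:ℝ) := by linarith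
  have h1σ : (0:ℝ) < 1 - σ := by linarith
  have h1α : (0:ℝ) < 1 - α := by linarith
  have hKpos : 0 < K := by nlinarith
  have hN : 0 < μ * ((I : ℝ) - 1) * α * (1 - α) * γ * (1 - σ) * β * Rbar :=
    mul_pos (mul_pos (mul_pos (mul_pos (mul_pos (mul_pos (mul_pos hμ hIm1) hα0) h1α) hγ0) h1σ) hβ0) hRbar
  have hD : 0 < γ * (1 - σ) * β * (μ * (I : ℝ) * ((I : ℝ) - 1) * α * (1 - α) + α * K) +
      σ * β * K ^ 2 := by
    have h1 : 0 < μ * (I : ℝ) * ((I : ℝ) - 1) * α * (1 - α) + α * K := by nlinarith [mul_pos hα0 hKpos, mul_pos (mul_pos (mul_pos (mul_pos hμ hIpos) hIm1) hα0) h1α]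
    have h2 : 0 ≤ σ * β * K ^ 2 := mul_nonneg (mul_nonneg hσ0 hβ0.le) (sq_nonneg K)
    nlinarith [mul_pos (mul_pos (mul_pos hγ0 h1σ) hβ0) h1]
  constructor
  · rw [hg]; exact div_pos hN hD
  · rw [hg, div_lt_div_iff₀ hD hIpos]
    nlinarith [mul_pos hRbar (mul_pos (mul_pos (mul_pos (mul_pos hγ0 h1σ) hβ0) hα0) hKpos),
      mul_nonneg (mul_nonneg (mul_nonneg hRbar.le hσ0) hβ0.le) (sq_nonneg K)]
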